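/- arXiv:1105.2359 — 3 statements merged into one kernel-verified Lean document; each statement's English description precedes it below -/
import Mathlib

section
/- The support of the minimizer of a strictly convex function φ(v) = Σ_i d_i v_i(log v_i − 1) (d_i > 0) over a nonempty polyhedron P ⊆ {v ≥ 0} contains the support of every feasible point: if ṽ ∈ P then supp(ṽ) ⊆ supp(v*) where v* is the minimizer of φ over P. -/
open Matrix

lemma gconv8 : ConvexOn ℝ (Set.Ici (0:ℝ)) (fun x => x * (Real.log x - 1)) := by
  have h1 : ConvexOn ℝ (Set.Ici (0:ℝ)) (fun x : ℝ => x * Real.log x) :=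
    Real.convexOn_mul_log
  have h2 : ConvexOn ℝ (Set.Ici (0:ℝ)) (fun x : ℝ => -x) := by
    exact (concaveOn_id (convex_Ici (0:ℝ) : Convex ℝ _)).neg
  have h3 := h1.add h2
  have heq : (fun x : ℝ => x * (Real.log x - 1))
      = (fun x : ℝ => x * Real.log x) + (fun x : ℝ => -x) := by
    funext x; simp [Pi.add_apply]; ring
  rw [heq]; exact h3

/-- the minimizer `v*` of `φ(v) = Σ d_i v_i (log v_i - 1)`
(`d_i > 0`, `0 log 0 = 0`) over a nonempty bounded polyhedron
`P = {v : Mv = q, v ≥ 0}` has support containing that of every feasible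
point. -/
theorem stmt8 {k N : ℕ} (M : Matrix (Fin k) (Fin N) ℝ) (q : Fin k → ℝ)
    (d : Fin N → ℝ) (hd : ∀ i, 0 < d i)
    (P : Set (Fin N → ℝ)) (hP : P = {v | M.mulVec v = q ∧ ∀ i, 0 ≤ v i})
    (hne : P.Nonempty) (hbd : Bornology.IsBounded P)
    (vstar : Fin N → ℝ) (hvstar : vstar ∈ P)
    (hmin : ∀ w ∈ P, (∑ i, d i * vstar i * (Real.log (vstar i) - 1))
      ≤ ∑ i, d i * w i * (Real.log (w i) - 1))
    (vt : Fin N → ℝ) (hvt : vt ∈ P) :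
    ∀ i, vt i ≠ 0 → vstar i ≠ 0 := by
  intro j hvtj hvsj
  subst hP
  obtain ⟨hMs, hs0⟩ := hvstar
  obtain ⟨hMt, ht0'⟩ := hvt
  have hbj : 0 < vt j := lt_of_le_of_ne (ht0' j) (Ne.symm hvtj)
  set A := ∑ i, d i * vstar i * (Real.log (vstar i) - 1) with hA
  set B := ∑ i, d i * vt i * (Real.log (vt i) - 1) with hB
  have hAB : A ≤ B := hmin vt ⟨hMt, ht0'⟩
  set c := d j * vt j with hc
  have hcpos : 0 < c := mul_pos (hd j) hbj
  set t := min (1/2 : ℝ) (Real.exp (-(B - A + 1)/c)) with htdef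
  have ht0 : 0 < t := lt_min (by norm_num) (Real.exp_pos _)
  have ht1 : t ≤ 1 := le_trans (min_le_left _ _) (by norm_num)
  have hlogt : Real.log t ≤ -(B - A + 1)/c := by
    calc Real.log t ≤ Real.log (Real.exp (-(B - A + 1)/c)) :=
          Real.log_le_log ht0 (min_le_right _ _)
      _ = -(B - A + 1)/c := Real.log_exp _
  have hclogt : c * Real.log t ≤ -(B - A + 1) := by
    have := mul_le_mul_of_nonneg_left hlogt hcpos.le
    rwa [mul_div_cancel₀ _ hcpos.ne'] at this
  set mix : Fin N → ℝ := fun i => (1 - t) * vstar i + t * vt i with hmix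
  have hmixP : mix ∈ {v | M.mulVec v = q ∧ ∀ i, 0 ≤ v i} := by
    constructor
    · have : mix = (1 - t) • vstar + t • vt := by
        funext i; simp [hmix, smul_eq_mul]
      rw [this, mulVec_add, mulVec_smul, mulVec_smul, hMs, hMt, ← add_smul]
      simp
    · intro i
      have h1 := mul_nonneg (by linarith : (0:ℝ) ≤ 1 - t) (hs0 i)
      have h2 := mul_nonneg ht0.le (ht0' i)
      simp only [hmix]; linarith
  -- pointwise bound
  have hpt : ∀ i, d i * mix i * (Real.log (mix i) - 1) ≤
      (1 - t) * (d i * vstar i * (Real.log (vstar i) - 1))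
      + t * (d i * vt i * (Real.log (vt i) - 1))
      + (if i = j then c * t * Real.log t else 0) := by
    intro i
    by_cases hij : i = j
    · subst hij
      rw [if_pos rfl]
      have : mix i = t * vt i := by simp [hmix, hvsj]
      rw [this, hvsj, Real.log_mul ht0.ne' hvtj]
      ring_nf
      nlinarith [Real.log_exp (0:ℝ)]
    · rw [if_neg hij, add_zero]
      have key := gconv8.2 (Set.mem_Ici.2 (hs0 i)) (Set.mem_Ici.2 (ht0' i))
        (by linarith : (0:ℝ) ≤ 1 - t) ht0.le (by ring)
      simp only [smul_eq_mul] at key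
      have hdi := (hd i).le
      calc d i * mix i * (Real.log (mix i) - 1)
          = d i * (mix i * (Real.log (mix i) - 1)) := by ring
        _ ≤ d i * ((1 - t) * (vstar i * (Real.log (vstar i) - 1))
              + t * (vt i * (Real.log (vt i) - 1))) :=
            mul_le_mul_of_nonneg_left key hdi
        _ = (1 - t) * (d i * vstar i * (Real.log (vstar i) - 1))
              + t * (d i * vt i * (Real.log (vt i) - 1)) := by ring
  have hsum : ∑ i, d i * mix i * (Real.log (mix i) - 1) ≤
      (1 - t) * A + t * B + c * t * Real.log t := by
    calc ∑ i, d i * mix i * (Real.log (mix i) - 1)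
        ≤ ∑ i, ((1 - t) * (d i * vstar i * (Real.log (vstar i) - 1))
            + t * (d i * vt i * (Real.log (vt i) - 1))
            + (if i = j then c * t * Real.log t else 0)) :=
          Finset.sum_le_sum (fun i _ => hpt i)
      _ = (1 - t) * A + t * B + c * t * Real.log t := by
          rw [Finset.sum_add_distrib, Finset.sum_add_distrib, hA, hB,
            ← Finset.mul_sum, ← Finset.mul_sum]
          congr 1
          simp
  have hAle := le_trans (hmin mix hmixP) hsum
  nlinarith [mul_pos ht0 hcpos]
end

section
/- For a mass conserving network with a single terminal-linkage class (strongly connected reaction graph), the all-ones vector \mathbf{1} ∈ ℝ^n lies in the range of Y^T; specifically Y^T e = β̂ \mathbf{1} for some scalar β̂, where e is the positive mass vector. -/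
open Matrix

/-- for a mass conserving single terminal-linkage (strongly
connected) network, `Yᵀ e = β̂ 1` for some scalar `β̂`; in particular `1` is
in the range of `Yᵀ`. -/
theorem stmt14 {m n : ℕ} (Y : Matrix (Fin m) (Fin n) ℝ) (hY : ∀ i j, 0 ≤ Y i j)
    (A : Matrix (Fin n) (Fin n) ℝ) (hA : ∀ i j, 0 ≤ A i j)
    (hconn : ∀ i j : Fin n, Relation.ReflTransGen (fun a b => 0 < A a b) i j)
    (e : Fin m → ℝ) (he : ∀ i, 0 < e i)
    (hmass : Matrix.vecMul e (Y * (Aᵀ - Matrix.diagonal (A.mulVec 1))) = 0) :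
    ∃ β : ℝ, Yᵀ.mulVec e = fun _ => β := by
  rcases Nat.eq_zero_or_pos n with hn | hn
  · exact ⟨0, funext fun j => absurd j.2 (by omega)⟩
  set v : Fin n → ℝ := Matrix.vecMul e Y with hv
  have hmass' : Matrix.vecMul v (Aᵀ - Matrix.diagonal (A.mulVec 1)) = 0 := by
    rw [hv, Matrix.vecMul_vecMul]; exact hmass
  have key : ∀ a : Fin n, ∑ i, A a i * v i = (∑ i, A a i) * v a := by
    intro a
    have h := congrFun hmass' a
    simp [Matrix.vecMul, dotProduct, Matrix.sub_apply, Matrix.transpose_apply,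
      Matrix.diagonal_apply, Matrix.mulVec, mul_sub, Finset.sum_sub_distrib,
      Finset.mul_sum, Finset.sum_mul, mul_ite, sub_eq_zero] at h ⊢
    calc ∑ i, A a i * v i = ∑ i, v i * A a i := Finset.sum_congr rfl fun i _ => mul_comm _ _
      _ = ∑ i, v a * A a i := h
      _ = ∑ i, A a i * v a := Finset.sum_congr rfl fun i _ => mul_comm _ _
  haveI : Nonempty (Fin n) := ⟨⟨0, hn⟩⟩
  obtain ⟨i₀, -, hmax⟩ := Finset.exists_max_image Finset.univ v ⟨⟨0, hn⟩, Finset.mem_univ _⟩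
  have step : ∀ a b : Fin n, v a = v i₀ → 0 < A a b → v b = v i₀ := by
    intro a b hva hab
    have h0 : ∑ i, A a i * (v i - v a) = 0 := by
      have := key a
      simp [mul_sub, Finset.sum_sub_distrib, Finset.sum_mul, this]
    have hnp : ∀ i ∈ Finset.univ, A a i * (v i - v a) ≤ 0 := by
      intro i _
      apply mul_nonpos_of_nonneg_of_nonpos (hA a i)
      have := hmax i (Finset.mem_univ i)
      rw [hva] at *
      linarith
    have := (Finset.sum_eq_zero_iff_of_nonpos hnp).mp h0 b (Finset.mem_univ b)
    have hvb : v b - v a = 0 := by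
      rcases mul_eq_zero.mp this with h | h
      · exact absurd h (ne_of_gt hab)
      · exact h
    rw [← hva]; linarith [sub_eq_zero.mp hvb]
  have hall : ∀ j, v j = v i₀ := by
    intro j
    induction hconn i₀ j with
    | refl => rfl
    | tail _ hbc ih => exact step _ _ ih hbc
  refine ⟨v i₀, funext fun j => ?_⟩
  rw [← hall j, hv]
  simp [Matrix.mulVec, Matrix.vecMul, dotProduct, mul_comm]
end

section
/- Suppose there exist c > 0 in ℝ^m, α > 0 with Y A_k ψ(c) = α b, and suppose \mathbf{1} is in the range of Y^T. Then there exists c̃ > 0 with Y A_k ψ(c̃) = b. Consequently, for a mass conserving single terminal-linkage network, a positive steady state Y A_k ψ(c) = b exists if and only if b is in the range of Y A_k. -/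
open Matrix

/-- if `Y A_k ψ(c) = α b` for some `c > 0`, `α > 0`, and `1` is
in the range of `Yᵀ`, then there is `c̃ > 0` with `Y A_k ψ(c̃) = b`.
Consequently, for a mass conserving single terminal-linkage network (where the
scaled steady state is provided by the earlier results, hypothesis `hprev`),
a positive steady state `Y A_k ψ(c) = b` exists iff `b ∈ range (Y A_k)`. -/
theorem stmt16 {m n : ℕ} (Y : Matrix (Fin m) (Fin n) ℝ) (hY : ∀ i j, 0 ≤ Y i j)
    (A : Matrix (Fin n) (Fin n) ℝ) (hA : ∀ i j, 0 ≤ A i j)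
    (hconn : ∀ i j : Fin n, Relation.ReflTransGen (fun a b => 0 < A a b) i j)
    (e : Fin m → ℝ) (he : ∀ i, 0 < e i)
    (hmass : Matrix.vecMul e (Y * (Aᵀ - Matrix.diagonal (A.mulVec 1))) = 0)
    (ψ : (Fin m → ℝ) → Fin n → ℝ) (hψ : ∀ c j, ψ c j = ∏ i, c i ^ Y i j)
    (hone : ∃ δ : Fin m → ℝ, ∀ j, ∑ i, Y i j * δ i = 1)
    (b : Fin m → ℝ)
    (hprev : (∃ η, b = (Y * (Aᵀ - Matrix.diagonal (A.mulVec 1))).mulVec η) →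
      ∃ c : Fin m → ℝ, ∃ α : ℝ, (∀ i, 0 < c i) ∧ 0 < α ∧
        (Y * (Aᵀ - Matrix.diagonal (A.mulVec 1))).mulVec (ψ c) = α • b) :
    ((∀ c : Fin m → ℝ, ∀ α : ℝ, (∀ i, 0 < c i) → 0 < α →
        (Y * (Aᵀ - Matrix.diagonal (A.mulVec 1))).mulVec (ψ c) = α • b →
        ∃ ct : Fin m → ℝ, (∀ i, 0 < ct i) ∧
          (Y * (Aᵀ - Matrix.diagonal (A.mulVec 1))).mulVec (ψ ct) = b) ∧
      ((∃ c : Fin m → ℝ, (∀ i, 0 < c i) ∧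
          (Y * (Aᵀ - Matrix.diagonal (A.mulVec 1))).mulVec (ψ c) = b)
        ↔ ∃ η, b = (Y * (Aᵀ - Matrix.diagonal (A.mulVec 1))).mulVec η)) := by
  obtain ⟨δ, hδ⟩ := hone
  have main : ∀ c : Fin m → ℝ, ∀ α : ℝ, (∀ i, 0 < c i) → 0 < α →
      (Y * (Aᵀ - Matrix.diagonal (A.mulVec 1))).mulVec (ψ c) = α • b →
      ∃ ct : Fin m → ℝ, (∀ i, 0 < ct i) ∧
        (Y * (Aᵀ - Matrix.diagonal (A.mulVec 1))).mulVec (ψ ct) = b := by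
    intro c α hc hα hss
    set β : ℝ := α⁻¹ with hβ
    have hβpos : 0 < β := inv_pos.mpr hα
    refine ⟨fun i => β ^ δ i * c i, fun i => mul_pos (Real.rpow_pos_of_pos hβpos _) (hc i), ?_⟩
    have hψct : ψ (fun i => β ^ δ i * c i) = β • ψ c := by
      funext j
      rw [hψ, Pi.smul_apply, smul_eq_mul, hψ]
      have : ∀ i ∈ Finset.univ, (β ^ δ i * c i) ^ Y i j
          = β ^ (δ i * Y i j) * c i ^ Y i j := by
        intro i _
        rw [Real.mul_rpow (le_of_lt (Real.rpow_pos_of_pos hβpos _)) (le_of_lt (hc i)),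
          ← Real.rpow_mul hβpos.le]
      rw [Finset.prod_congr rfl this, Finset.prod_mul_distrib,
        ← Real.rpow_sum_of_pos hβpos]
      have : ∑ i, δ i * Y i j = 1 := by
        rw [← hδ j]; exact Finset.sum_congr rfl fun i _ => mul_comm _ _
      rw [this, Real.rpow_one]
    rw [hψct, Matrix.mulVec_smul, hss, smul_smul, hβ, inv_mul_cancel₀ (ne_of_gt hα), one_smul]
  refine ⟨main, ?_, ?_⟩
  · rintro ⟨c, hc, hss⟩
    exact ⟨ψ c, hss.symm⟩
  · intro hb
    obtain ⟨c, α, hc, hα, hss⟩ := hprev hb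
    obtain ⟨ct, hct, hss'⟩ := main c α hc hα hss
    exact ⟨ct, hct, hss'⟩
end
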